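/- Let R = ℝ[U,V]/(U² + V² − 1) with u, v the images of U, V, and B = R[X,Y,Z]. Let D be the R-derivation on B determined by DX = u, DY = v − 1, DZ = (1 − v)X + uY, which is a locally nilpotent nice R-derivation that is not fixed point free, with kernel A = R[f, g, h] where f = (1 − v)X + uY, g = (1 + v)Y + uX, and h = 2Z + fY − gX. Then the plinth ideal I_1 of D equals the ideal (u, v − 1, f)A of A. -/
import Mathlib

set_option maxHeartbeats 1000000
set_option synthInstance.maxHeartbeats 200000

/-- The coordinate ring `ℝ[U,V]/(U² + V² − 1)` of the circle. -/
noncomputable abbrev CircleRing : Type :=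
  MvPolynomial (Fin 2) ℝ ⧸
    Ideal.span {(MvPolynomial.X 0 : MvPolynomial (Fin 2) ℝ) ^ 2 +
      MvPolynomial.X 1 ^ 2 - 1}

namespace Stmt17Aux

open MvPolynomial

/-- The defining ideal of the circle. -/
noncomputable abbrev circIdeal : Ideal (MvPolynomial (Fin 2) ℝ) :=
  Ideal.span {(MvPolynomial.X 0 : MvPolynomial (Fin 2) ℝ) ^ 2 +
      MvPolynomial.X 1 ^ 2 - 1}

/-- Evaluation of the circle ring at the point `(0,1)`. -/
noncomputable def piR : CircleRing →+* ℝ :=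
  Ideal.Quotient.lift circIdeal (MvPolynomial.eval ![0, 1]) (by
    intro a ha
    rw [Ideal.mem_span_singleton'] at ha
    obtain ⟨c, rfl⟩ := ha
    simp)

lemma piR_mk (p : MvPolynomial (Fin 2) ℝ) :
    piR (Ideal.Quotient.mk circIdeal p) = MvPolynomial.eval ![0, 1] p :=
  Ideal.Quotient.lift_mk _ _ _

lemma keyA (p : MvPolynomial (Fin 2) ℝ) :
    p - C (eval ![0, 1] p) ∈ Ideal.span ({X 0, X 1 - 1} : Set (MvPolynomial (Fin 2) ℝ)) := by
  induction p using MvPolynomial.induction_on with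
  | C a => simp
  | add p q hp hq =>
      rw [map_add, C_add]
      convert Ideal.add_mem _ hp hq using 1
      ring
  | mul_X p i hp =>
      have h0 : (X 0 : MvPolynomial (Fin 2) ℝ) ∈ ({X 0, X 1 - 1} : Set _) :=
        Set.mem_insert _ _
      have h1' : (X 1 - 1 : MvPolynomial (Fin 2) ℝ) ∈ ({X 0, X 1 - 1} : Set _) :=
        Set.mem_insert_of_mem _ rfl
      have hXi : X i - C (![(0:ℝ), 1] i) ∈
          Ideal.span ({X 0, X 1 - 1} : Set (MvPolynomial (Fin 2) ℝ)) := by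
        fin_cases i
        · show (X 0 : MvPolynomial (Fin 2) ℝ) - C (![(0:ℝ), 1] 0) ∈
            Ideal.span ({X 0, X 1 - 1} : Set (MvPolynomial (Fin 2) ℝ))
          rw [show (![(0:ℝ), 1] 0) = 0 from rfl, map_zero, sub_zero]
          exact Ideal.subset_span h0
        · show (X 1 : MvPolynomial (Fin 2) ℝ) - C (![(0:ℝ), 1] 1) ∈
            Ideal.span ({X 0, X 1 - 1} : Set (MvPolynomial (Fin 2) ℝ))
          rw [show (![(0:ℝ), 1] 1) = 1 from rfl, map_one]
          exact Ideal.subset_span h1'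
      have heq : p * X i - C (eval ![0, 1] (p * X i)) =
          (p - C (eval ![0, 1] p)) * X i + C (eval ![0, 1] p) * (X i - C (![(0:ℝ), 1] i)) := by
        rw [map_mul, eval_X, C_mul]
        ring
      rw [heq]
      exact Ideal.add_mem _ (Ideal.mul_mem_right _ _ hp) (Ideal.mul_mem_left _ _ hXi)

lemma ker_piR_le (r : CircleRing) (hr : piR r = 0) :
    r ∈ Ideal.span ({Ideal.Quotient.mk circIdeal (X 0),
      Ideal.Quotient.mk circIdeal (X 1) - 1} : Set CircleRing) := by
  obtain ⟨p, rfl⟩ := Ideal.Quotient.mk_surjective r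
  rw [piR_mk] at hr
  have h1 := keyA p
  rw [hr, map_zero, sub_zero] at h1
  have h2 := Ideal.mem_map_of_mem (Ideal.Quotient.mk circIdeal) h1
  rw [Ideal.map_span, Set.image_insert_eq, Set.image_singleton] at h2
  simpa using h2

lemma decomp3 (P : MvPolynomial (Fin 3) CircleRing) :
    ∃ (Q : MvPolynomial (Fin 3) CircleRing) (S : MvPolynomial (Fin 2) CircleRing),
      P = X 0 * Q + rename (Fin.succ : Fin 2 → Fin 3) S := by
  induction P using MvPolynomial.induction_on with
  | C a => exact ⟨0, C a, by simp [rename_C]⟩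
  | add p q hp hq =>
      obtain ⟨Q₁, S₁, rfl⟩ := hp
      obtain ⟨Q₂, S₂, rfl⟩ := hq
      exact ⟨Q₁ + Q₂, S₁ + S₂, by rw [map_add]; ring⟩
  | mul_X p i hp =>
      obtain ⟨Q, S, rfl⟩ := hp
      induction i using Fin.cases with
      | zero => exact ⟨(X 0 * Q + rename (Fin.succ : Fin 2 → Fin 3) S), 0, by
          rw [map_zero]; ring⟩
      | succ j =>
          refine ⟨Q * X j.succ, S * X j, ?_⟩
          rw [map_mul, rename_X]
          ring

end Stmt17Aux

/-- **Example `nice_circle`**: let `R = ℝ[U,V]/(U² + V² − 1)` with `u, v` the images of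
`U, V`, and `B = R[X,Y,Z]`.  Let `D` be the `R`-derivation with `DX = u`,
`DY = v − 1`, `DZ = (1 − v)X + uY`; it is a locally nilpotent nice `R`-derivation
which is not fixed point free, with kernel `A = R[f,g,h]` where `f = (1 − v)X + uY`,
`g = (1 + v)Y + uX` and `h = 2Z + fY − gX`.  Then the plinth ideal `I_1` of `D`
equals the ideal `(u, v − 1, f)A` of `A`. -/
theorem stmt17
    (u v : CircleRing)
    (hu : u = Ideal.Quotient.mk _ (MvPolynomial.X 0))
    (hv : v = Ideal.Quotient.mk _ (MvPolynomial.X 1))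
    (D : Derivation CircleRing (MvPolynomial (Fin 3) CircleRing)
        (MvPolynomial (Fin 3) CircleRing))
    (f g h : MvPolynomial (Fin 3) CircleRing)
    (hf : f = algebraMap _ _ (1 - v) * MvPolynomial.X 0
        + algebraMap _ _ u * MvPolynomial.X 1)
    (hg : g = algebraMap _ _ (1 + v) * MvPolynomial.X 1
        + algebraMap _ _ u * MvPolynomial.X 0)
    (hh : h = 2 * MvPolynomial.X 2 + f * MvPolynomial.X 1 - g * MvPolynomial.X 0)
    (hDX : D (MvPolynomial.X 0)
        = algebraMap CircleRing (MvPolynomial (Fin 3) CircleRing) u)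
    (hDY : D (MvPolynomial.X 1)
        = algebraMap CircleRing (MvPolynomial (Fin 3) CircleRing) (v - 1))
    (hDZ : D (MvPolynomial.X 2) = f)
    (hlnd : ∀ q, ∃ M : ℕ, (⇑D)^[M] q = 0)
    (hnice : ∀ i : Fin 3, D (D (MvPolynomial.X i)) = 0)
    (hnfpf : Ideal.span (Set.range ⇑D) ≠ ⊤)
    (hker : ∀ q, D q = 0 ↔ q ∈ Algebra.adjoin CircleRing {f, g, h}) :
    {q : MvPolynomial (Fin 3) CircleRing | D q = 0 ∧ q ∈ Set.range ⇑D}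
      = {q : MvPolynomial (Fin 3) CircleRing |
          ∃ c₁ c₂ c₃, D c₁ = 0 ∧ D c₂ = 0 ∧ D c₃ = 0 ∧
            q = algebraMap _ _ u * c₁ + algebraMap _ _ (v - 1) * c₂ + f * c₃} := by
  classical
  have hDf : D f = 0 := by rw [← hDZ]; exact hnice 2
  have πu : Stmt17Aux.piR u = 0 := by rw [hu, Stmt17Aux.piR_mk]; simp
  have πv : Stmt17Aux.piR v = 1 := by rw [hv, Stmt17Aux.piR_mk]; simp
  -- the coefficientwise evaluation map φ : B → ℝ[X,Y,Z]
  let φ : MvPolynomial (Fin 3) CircleRing →+* MvPolynomial (Fin 3) ℝ :=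
    MvPolynomial.map Stmt17Aux.piR
  have φalg : ∀ r : CircleRing,
      φ (algebraMap CircleRing (MvPolynomial (Fin 3) CircleRing) r)
        = MvPolynomial.C (Stmt17Aux.piR r) := by
    intro r
    rw [MvPolynomial.algebraMap_eq]
    exact MvPolynomial.map_C Stmt17Aux.piR r
  have φX : ∀ i : Fin 3, φ (MvPolynomial.X i) = MvPolynomial.X i := fun i =>
    MvPolynomial.map_X Stmt17Aux.piR i
  have φf : φ f = 0 := by
    rw [hf, map_add, map_mul, map_mul, φalg, φalg, φX, φX]
    rw [map_sub, map_one, πu, πv]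
    simp
  have φg : φ g = MvPolynomial.C (2:ℝ) * MvPolynomial.X 1 := by
    rw [hg, map_add, map_mul, map_mul, φalg, φalg, φX, φX]
    rw [map_add, map_one, πu, πv]
    norm_num
  have φh : φ h = MvPolynomial.C (2:ℝ) * MvPolynomial.X 2
      - MvPolynomial.C (2:ℝ) * MvPolynomial.X 1 * MvPolynomial.X 0 := by
    have h2 : φ (2 : MvPolynomial (Fin 3) CircleRing) = MvPolynomial.C (2:ℝ) := by
      rw [show (2 : MvPolynomial (Fin 3) CircleRing)
          = algebraMap CircleRing (MvPolynomial (Fin 3) CircleRing) 2 by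
        rw [map_ofNat], φalg, map_ofNat]
    rw [hh, map_sub, map_add, map_mul, map_mul, map_mul, φf, φg, φX, φX, φX, h2]
    ring
  have φDX : ∀ i : Fin 3, φ (D (MvPolynomial.X i)) = 0 := by
    intro i
    fin_cases i
    · show φ (D (MvPolynomial.X 0)) = 0
      rw [hDX, φalg, πu, map_zero]
    · show φ (D (MvPolynomial.X 1)) = 0
      rw [hDY, φalg, map_sub, map_one, πv]; simp
    · show φ (D (MvPolynomial.X 2)) = 0
      rw [hDZ, φf]
  have φD : ∀ p, φ (D p) = 0 := by
    intro p
    induction p using MvPolynomial.induction_on with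
    | C a =>
        rw [← MvPolynomial.algebraMap_eq, Derivation.map_algebraMap, map_zero]
    | add p q hp hq => rw [map_add, map_add, hp, hq, add_zero]
    | mul_X p i hp =>
        rw [Derivation.leibniz, smul_eq_mul, smul_eq_mul, map_add, map_mul, map_mul,
          hp, φDX i, mul_zero, mul_zero, add_zero]
  ext q
  simp only [Set.mem_setOf_eq]
  constructor
  · rintro ⟨hq0, p, hp⟩
    have hφq : φ q = 0 := by rw [← hp]; exact φD p
    have hqA : q ∈ Algebra.adjoin CircleRing {f, g, h} := (hker q).1 hq0
    -- get a polynomial representation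
    have hle : Algebra.adjoin CircleRing ({f, g, h} : Set _) ≤
        (MvPolynomial.aeval (R := CircleRing) ![f, g, h]).range := by
      apply Algebra.adjoin_le
      intro x hx
      rcases hx with rfl | rfl | rfl
      · exact ⟨MvPolynomial.X 0, by simp⟩
      · exact ⟨MvPolynomial.X 1, by simp⟩
      · exact ⟨MvPolynomial.X 2, by simp⟩
    obtain ⟨P, hP0⟩ := hle hqA
    have hP : MvPolynomial.aeval (R := CircleRing) ![f, g, h] P = q := hP0
    clear hP0
    obtain ⟨Q, S, rfl⟩ := Stmt17Aux.decomp3 P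
    rw [map_add, map_mul, MvPolynomial.aeval_X, MvPolynomial.aeval_rename] at hP
    have hcomp : (![f, g, h] ∘ (Fin.succ : Fin 2 → Fin 3)) = ![g, h] := by
      funext i; fin_cases i <;> rfl
    rw [hcomp] at hP
    rw [show (![f, g, h] 0) = f from rfl] at hP
    -- now q = f * (aeval Q) + aeval ![g,h] S
    have hmem : ∀ (k : Fin 2 → MvPolynomial (Fin 3) CircleRing),
        Set.range k ⊆ {f, g, h} →
        ∀ a : MvPolynomial (Fin 2) CircleRing,
          MvPolynomial.aeval k a ∈ Algebra.adjoin CircleRing {f, g, h} := by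
      intro k hk a
      have h1 : MvPolynomial.aeval k a ∈ (MvPolynomial.aeval k).range := ⟨a, rfl⟩
      rw [← Algebra.adjoin_range_eq_range_aeval] at h1
      exact Algebra.adjoin_mono hk h1
    -- φ (aeval ![g,h] S) = 0
    have hφw : φ (MvPolynomial.aeval (R := CircleRing) ![g, h] S) = 0 := by
      have h1 := hφq
      rw [← hP, map_add, map_mul, φf, zero_mul, zero_add] at h1
      exact h1
    -- φ w = aeval ![2Y, 2Z-2YX] (map Stmt17Aux.piR S)
    have hφw2 : φ (MvPolynomial.aeval (R := CircleRing) ![g, h] S) = MvPolynomial.aeval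
        (![MvPolynomial.C (2:ℝ) * MvPolynomial.X 1,
          MvPolynomial.C (2:ℝ) * MvPolynomial.X 2
            - MvPolynomial.C (2:ℝ) * MvPolynomial.X 1 * MvPolynomial.X 0] :
          Fin 2 → MvPolynomial (Fin 3) ℝ) (MvPolynomial.map Stmt17Aux.piR S) := by
      rw [MvPolynomial.map_aeval]
      rw [MvPolynomial.aeval_def, MvPolynomial.eval₂_map]
      have e1 : (φ.comp (algebraMap CircleRing (MvPolynomial (Fin 3) CircleRing)))
          = (algebraMap ℝ (MvPolynomial (Fin 3) ℝ)).comp Stmt17Aux.piR := by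
        refine RingHom.ext fun r => ?_
        simp only [RingHom.coe_comp, Function.comp_apply]
        rw [φalg r, MvPolynomial.algebraMap_eq]
      have e2 : (fun i => φ (![g, h] i)) =
          (![MvPolynomial.C (2:ℝ) * MvPolynomial.X 1,
            MvPolynomial.C (2:ℝ) * MvPolynomial.X 2
              - MvPolynomial.C (2:ℝ) * MvPolynomial.X 1 * MvPolynomial.X 0] :
            Fin 2 → MvPolynomial (Fin 3) ℝ) := by
        funext i
        fin_cases i
        · show φ g = MvPolynomial.C (2:ℝ) * MvPolynomial.X 1
          exact φg
        · show φ h = MvPolynomial.C (2:ℝ) * MvPolynomial.X 2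
            - MvPolynomial.C (2:ℝ) * MvPolynomial.X 1 * MvPolynomial.X 0
          exact φh
      rw [e1, e2]
      rfl
    -- apply the retraction χ to conclude map Stmt17Aux.piR S = 0
    have hS0 : MvPolynomial.map Stmt17Aux.piR S = 0 := by
      set χ : MvPolynomial (Fin 3) ℝ →ₐ[ℝ] MvPolynomial (Fin 2) ℝ :=
        MvPolynomial.aeval ![0, MvPolynomial.C (1/2 : ℝ) * MvPolynomial.X 0,
          MvPolynomial.C (1/2 : ℝ) * MvPolynomial.X 1] with hχ
      have h1 : χ (φ (MvPolynomial.aeval (R := CircleRing) ![g, h] S)) = 0 := by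
        rw [hφw, map_zero]
      rw [hφw2, MvPolynomial.comp_aeval_apply] at h1
      have h2 : (fun i => χ
          (![MvPolynomial.C (2:ℝ) * MvPolynomial.X 1,
            MvPolynomial.C (2:ℝ) * MvPolynomial.X 2
              - MvPolynomial.C (2:ℝ) * MvPolynomial.X 1 * MvPolynomial.X 0]
            i)) = (MvPolynomial.X : Fin 2 → MvPolynomial (Fin 2) ℝ) := by
        funext i
        fin_cases i
        · show χ (MvPolynomial.C (2:ℝ) * MvPolynomial.X 1) = MvPolynomial.X 0
          rw [hχ, map_mul, MvPolynomial.aeval_C, MvPolynomial.aeval_X]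
          show algebraMap ℝ _ 2 * (MvPolynomial.C (1/2 : ℝ) * MvPolynomial.X 0) = _
          rw [MvPolynomial.algebraMap_eq, ← mul_assoc, ← MvPolynomial.C_mul]
          norm_num
        · show χ (MvPolynomial.C (2:ℝ) * MvPolynomial.X 2
              - MvPolynomial.C (2:ℝ) * MvPolynomial.X 1 * MvPolynomial.X 0)
            = MvPolynomial.X 1
          rw [hχ, map_sub, map_mul, map_mul, map_mul, MvPolynomial.aeval_C,
            MvPolynomial.aeval_X, MvPolynomial.aeval_X, MvPolynomial.aeval_X]
          show algebraMap ℝ _ 2 * (MvPolynomial.C (1/2 : ℝ) * MvPolynomial.X 1)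
            - algebraMap ℝ _ 2 * (MvPolynomial.C (1/2 : ℝ) * MvPolynomial.X 0) * 0 = _
          rw [MvPolynomial.algebraMap_eq, ← mul_assoc, ← MvPolynomial.C_mul]
          norm_num
      rw [h2, MvPolynomial.aeval_X_left_apply] at h1
      exact h1
    -- coefficients of S lie in (u, v-1)
    have hSmem : S ∈ Ideal.span ({MvPolynomial.C u, MvPolynomial.C (v - 1)} :
        Set (MvPolynomial (Fin 2) CircleRing)) := by
      have hker' : S ∈ RingHom.ker (MvPolynomial.map Stmt17Aux.piR :
          MvPolynomial (Fin 2) CircleRing →+* MvPolynomial (Fin 2) ℝ) := hS0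
      rw [MvPolynomial.ker_map] at hker'
      have hmap : Ideal.map (MvPolynomial.C : CircleRing →+* MvPolynomial (Fin 2) CircleRing)
          (RingHom.ker Stmt17Aux.piR) ≤
          Ideal.span ({MvPolynomial.C u, MvPolynomial.C (v - 1)} :
            Set (MvPolynomial (Fin 2) CircleRing)) := by
        rw [show ({MvPolynomial.C u, MvPolynomial.C (v - 1)} :
            Set (MvPolynomial (Fin 2) CircleRing)) =
            (MvPolynomial.C : CircleRing →+* MvPolynomial (Fin 2) CircleRing) '' {u, v - 1} by
          rw [Set.image_insert_eq, Set.image_singleton], ← Ideal.map_span]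
        apply Ideal.map_mono
        intro r hr
        have h3 := Stmt17Aux.ker_piR_le r hr
        rw [← hu, ← hv] at h3
        exact h3
      exact hmap hker'
    rw [Ideal.mem_span_pair] at hSmem
    obtain ⟨a, b, hab⟩ := hSmem
    refine ⟨MvPolynomial.aeval ![g, h] a, MvPolynomial.aeval ![g, h] b,
      MvPolynomial.aeval ![f, g, h] Q, ?_, ?_, ?_, ?_⟩
    · exact (hker _).2 (hmem ![g, h] (by rintro x ⟨i, rfl⟩; fin_cases i <;> simp) a)
    · exact (hker _).2 (hmem ![g, h] (by rintro x ⟨i, rfl⟩; fin_cases i <;> simp) b)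
    · refine (hker _).2 ?_
      have h1 : MvPolynomial.aeval (R := CircleRing) ![f, g, h] Q
          ∈ (MvPolynomial.aeval (R := CircleRing) ![f, g, h]).range := ⟨Q, rfl⟩
      rw [← Algebra.adjoin_range_eq_range_aeval] at h1
      refine Algebra.adjoin_mono ?_ h1
      rintro x ⟨i, rfl⟩; fin_cases i <;> simp
    · rw [← hP, ← hab, map_add, map_mul, map_mul, MvPolynomial.aeval_C,
        MvPolynomial.aeval_C]
      ring
  · rintro ⟨c₁, c₂, c₃, hc1, hc2, hc3, rfl⟩
    constructor
    · rw [map_add, map_add, Derivation.leibniz, Derivation.leibniz, Derivation.leibniz,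
        hc1, hc2, hc3, hDf, Derivation.map_algebraMap, Derivation.map_algebraMap]
      simp
    · refine ⟨MvPolynomial.X 0 * c₁ + MvPolynomial.X 1 * c₂ + MvPolynomial.X 2 * c₃, ?_⟩
      rw [map_add, map_add, Derivation.leibniz, Derivation.leibniz, Derivation.leibniz,
        hc1, hc2, hc3, hDX, hDY, hDZ]
      simp only [smul_eq_mul, smul_zero, mul_zero, add_zero, zero_add]
      ring
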